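/- Let A and B be N×N Hermitian matrices. If there exist r orthonormal vectors that are simultaneously eigenvectors of both A and B, then r ≤ N − (‖[A,B]‖_HS / ‖[A,B]‖₂)², provided [A,B] ≠ 0. -/

import Mathlib

open scoped Matrix ComplexOrder
open Finset

noncomputable def frobNorm {n : ℕ} (X : Matrix (Fin n) (Fin n) ℂ) : ℝ :=
  Real.sqrt (∑ i, ∑ j, ‖X i j‖ ^ 2)

noncomputable def specNorm {n : ℕ} (X : Matrix (Fin n) (Fin n) ℂ) : ℝ :=
  ‖LinearMap.toContinuousLinearMap (Matrix.toEuclideanLin X)‖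

lemma parseval' {𝕜 : Type*} [RCLike 𝕜] {E : Type*} [NormedAddCommGroup E]
    [InnerProductSpace 𝕜 E] {ι : Type*} [Fintype ι]
    (b : OrthonormalBasis ι 𝕜 E) (x : E) :
    ‖x‖ ^ 2 = ∑ i, ‖(inner 𝕜 (b i) x : 𝕜)‖ ^ 2 := by
  have h1 : ‖x‖ = ‖b.repr x‖ := (b.repr.norm_map x).symm
  rw [h1, EuclideanSpace.norm_eq, Real.sq_sqrt (by positivity)]
  exact Finset.sum_congr rfl fun i _ => by rw [b.repr_apply_apply]

lemma hs_indep' {E : Type*} [NormedAddCommGroup E] [InnerProductSpace ℂ E]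
    [FiniteDimensional ℂ E] {ι κ : Type*} [Fintype ι] [Fintype κ]
    (b : OrthonormalBasis ι ℂ E) (c : OrthonormalBasis κ ℂ E) (f : E →ₗ[ℂ] E) :
    ∑ i, ‖f (b i)‖ ^ 2 = ∑ j, ‖LinearMap.adjoint f (c j)‖ ^ 2 := by
  calc ∑ i, ‖f (b i)‖ ^ 2
      = ∑ i, ∑ j, ‖(inner ℂ (c j) (f (b i)) : ℂ)‖ ^ 2 :=
        Finset.sum_congr rfl fun i _ => parseval' c _
    _ = ∑ j, ∑ i, ‖(inner ℂ (b i) (LinearMap.adjoint f (c j)) : ℂ)‖ ^ 2 := by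
        rw [Finset.sum_comm]
        refine Finset.sum_congr rfl fun j _ => Finset.sum_congr rfl fun i _ => ?_
        rw [← LinearMap.adjoint_inner_left]; rw [norm_inner_symm]
    _ = ∑ j, ‖LinearMap.adjoint f (c j)‖ ^ 2 :=
        Finset.sum_congr rfl fun j _ => (parseval' b _).symm

set_option maxHeartbeats 1000000 in
theorem stmt1 {N r : ℕ} (A B : Matrix (Fin N) (Fin N) ℂ)
    (hA : A.IsHermitian) (hB : B.IsHermitian)
    (hC : A * B - B * A ≠ 0)
    (v : Fin r → (Fin N → ℂ))
    (horth : ∀ i j, star (v i) ⬝ᵥ v j = if i = j then 1 else 0)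
    (α β : Fin r → ℂ)
    (hAv : ∀ i, A.mulVec (v i) = α i • v i)
    (hBv : ∀ i, B.mulVec (v i) = β i • v i) :
    (r : ℝ) ≤ (N : ℝ) - (frobNorm (A * B - B * A) / specNorm (A * B - B * A)) ^ 2 := by
  classical
  set C : Matrix (Fin N) (Fin N) ℂ := A * B - B * A with hCdef
  set f : EuclideanSpace ℂ (Fin N) →ₗ[ℂ] EuclideanSpace ℂ (Fin N) :=
    (Matrix.toEuclideanLin C : _) with hfdef
  set T := LinearMap.toContinuousLinearMap f with hTdef
  set S := specNorm C with hSdef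
  set F := frobNorm C with hFdef
  -- C kills each v i
  have hCv : ∀ i, C.mulVec (v i) = 0 := by
    intro i
    have h1 : C.mulVec (v i) = A.mulVec (B.mulVec (v i)) - B.mulVec (A.mulVec (v i)) := by
      rw [hCdef, Matrix.sub_mulVec, Matrix.mulVec_mulVec, Matrix.mulVec_mulVec]
    rw [h1, hBv, hAv, Matrix.mulVec_smul, Matrix.mulVec_smul, hAv, hBv,
      smul_smul, smul_smul, mul_comm]
    simp
  -- vectors in EuclideanSpace
  set V : Fin r → EuclideanSpace ℂ (Fin N) :=
    fun i => (WithLp.equiv 2 (Fin N → ℂ)).symm (v i) with hVdef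
  have hVorth : Orthonormal ℂ V := by
    rw [orthonormal_iff_ite]
    intro i j
    rw [hVdef]
    simpa [EuclideanSpace.inner_toLp_toLp, dotProduct_comm (v j)] using horth i j
  have hfapp : ∀ u : Fin N → ℂ,
      f ((WithLp.equiv 2 (Fin N → ℂ)).symm u) = (WithLp.equiv 2 (Fin N → ℂ)).symm (C.mulVec u) :=
    fun u => rfl
  have hfV : ∀ i, f (V i) = 0 := by
    intro i
    rw [hVdef]
    rw [hfapp, hCv]
    rfl
  -- r ≤ N
  have hrN : r ≤ N := by
    have := hVorth.linearIndependent.fintype_card_le_finrank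
    simpa using this
  -- extend to an orthonormal basis
  set s : Set (Fin N) := {i | (i : ℕ) < r} with hsdef
  set w : Fin N → EuclideanSpace ℂ (Fin N) :=
    fun i => if h : (i : ℕ) < r then V ⟨i, h⟩ else 0 with hwdef
  have hworth : Orthonormal ℂ (s.restrict w) := by
    rw [orthonormal_iff_ite]
    rintro ⟨i, hi⟩ ⟨j, hj⟩
    have hi' : (i : ℕ) < r := hi
    have hj' : (j : ℕ) < r := hj
    have := (orthonormal_iff_ite.mp hVorth) ⟨i, hi'⟩ ⟨j, hj'⟩
    simp only [Set.restrict, Set.domRestrict_apply, hwdef, dif_pos hi', dif_pos hj']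
    rw [this]
    congr 1
    simp [Fin.ext_iff, Subtype.ext_iff]
  obtain ⟨b, hb⟩ := hworth.exists_orthonormalBasis_extension_of_card_eq
    (by simp) (v := w)
  -- spectral norm positive
  have hfne : f ≠ 0 := by
    intro h
    apply hC
    have : Matrix.toEuclideanLin (C : Matrix (Fin N) (Fin N) ℂ) = 0 := h
    simpa using (Matrix.toEuclideanLin.injective (by simpa using this))
  have hS : 0 < S := by
    rw [hSdef, specNorm, norm_pos_iff]
    intro h
    apply hfne
    apply LinearMap.ext
    intro x
    have hx : f x = T x := (congrFun (LinearMap.coe_toContinuousLinearMap' f) x).symm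
    rw [hx, hTdef, hfdef, h]
    rfl
  have hle : ∀ x : EuclideanSpace ℂ (Fin N), ‖f x‖ ≤ S * ‖x‖ := by
    intro x
    have h := T.le_opNorm x
    rwa [(congrFun (LinearMap.coe_toContinuousLinearMap' f) x : T x = f x)] at h
  -- Frobenius via standard basis
  have hFrob : F ^ 2 = ∑ j, ‖f ((EuclideanSpace.basisFun (Fin N) ℂ) j)‖ ^ 2 := by
    rw [hFdef, frobNorm, Real.sq_sqrt (Finset.sum_nonneg fun _ _ => Finset.sum_nonneg fun _ _ => sq_nonneg _), Finset.sum_comm]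
    refine Finset.sum_congr rfl fun j _ => ?_
    rw [EuclideanSpace.basisFun_apply]
    rw [show (EuclideanSpace.single j (1:ℂ)) = (WithLp.equiv 2 (Fin N → ℂ)).symm (Pi.single j 1)
      from rfl]
    rw [hfapp, EuclideanSpace.norm_eq, Real.sq_sqrt (Finset.sum_nonneg fun _ _ => sq_nonneg _)]
    refine Finset.sum_congr rfl fun i _ => ?_
    congr 1
    rw [WithLp.equiv_symm_apply, PiLp.toLp_apply, Matrix.mulVec_single]
    simp
  -- basis independence
  have hchain : F ^ 2 = ∑ i, ‖f (b i)‖ ^ 2 := by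
    rw [hFrob, hs_indep' (EuclideanSpace.basisFun (Fin N) ℂ) (EuclideanSpace.basisFun (Fin N) ℂ) f,
      hs_indep' b (EuclideanSpace.basisFun (Fin N) ℂ) f]
  -- split the sum
  have hsplit : ∑ i, ‖f (b i)‖ ^ 2 ≤ (N - r : ℝ) * S ^ 2 := by
    have hcard : (Finset.univ.filter (fun i : Fin N => (i : ℕ) < r)).card = r := by
      have himg : (Finset.univ.filter (fun i : Fin N => (i : ℕ) < r)) =
          (Finset.univ : Finset (Fin r)).map ⟨Fin.castLE hrN, Fin.castLE_injective hrN⟩ := by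
        ext i
        simp only [Finset.mem_filter, Finset.mem_univ, true_and, Finset.mem_map,
          Function.Embedding.coeFn_mk]
        constructor
        · intro h; exact ⟨⟨i, h⟩, by simp [Fin.ext_iff]⟩
        · rintro ⟨j, rfl⟩; exact j.2
      rw [himg, Finset.card_map, Finset.card_univ, Fintype.card_fin]
    have hcard' : (Finset.univ.filter (fun i : Fin N => ¬ (i : ℕ) < r)).card = N - r := by
      have h := Finset.card_filter_add_card_filter_not
        (s := (Finset.univ : Finset (Fin N))) (p := fun i : Fin N => (i : ℕ) < r)
      rw [hcard, Finset.card_univ, Fintype.card_fin] at h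
      omega
    calc ∑ i, ‖f (b i)‖ ^ 2
        = ∑ i ∈ Finset.univ.filter (fun i : Fin N => ¬ (i : ℕ) < r), ‖f (b i)‖ ^ 2 := by
          rw [← Finset.sum_filter_add_sum_filter_not Finset.univ (fun i : Fin N => (i : ℕ) < r)]
          have hzero : ∑ i ∈ Finset.univ.filter (fun i : Fin N => (i : ℕ) < r), ‖f (b i)‖ ^ 2 = 0 := by
            refine Finset.sum_eq_zero fun i hi => ?_
            have hi' : (i : ℕ) < r := (Finset.mem_filter.mp hi).2
            have hbi : b i = V ⟨i, hi'⟩ := by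
              rw [hb i hi', hwdef]; simp [hi']
            rw [hbi, hfV]
            simp
          rw [hzero, zero_add]
      _ ≤ ∑ _i ∈ Finset.univ.filter (fun i : Fin N => ¬ (i : ℕ) < r), S ^ 2 := by
          refine Finset.sum_le_sum fun i _ => ?_
          have h1 := hle (b i)
          have h2 : ‖b i‖ = 1 := b.orthonormal.1 i
          rw [h2, mul_one] at h1
          have := sq_le_sq' (by linarith [norm_nonneg (f (b i))]) h1
          simpa using this
      _ = (N - r : ℝ) * S ^ 2 := by
          rw [Finset.sum_const, hcard', nsmul_eq_mul, Nat.cast_sub hrN]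
  -- conclude
  have hF2 : F ^ 2 ≤ ((N : ℝ) - r) * S ^ 2 := by rw [hchain]; exact hsplit
  have hS2 : (0:ℝ) < S ^ 2 := by positivity
  have hdiv : (F / S) ^ 2 ≤ (N : ℝ) - r := by
    rw [div_pow, div_le_iff₀ hS2]
    exact hF2
  linarith
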